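/- arXiv:1408.1056 — 2 statements merged into one kernel-verified Lean document; each statement's English description precedes it below -/
import Mathlib

section
/- Let θ : ℝ → ℝ be C¹, bounded, even, and nonincreasing on [0,∞). Then for all 0 < x₂ < x₁, ∫_{x₂}^{x₁} Hθ(x)·θ'(x) dx ≥ (1/(4π))·log((x₁+x₂)/(x₁−x₂))·(θ(x₂)−θ(x₁))². -/
open MeasureTheory Filter Set Topology

/-- The Hilbert transform of an even function `θ`,
`Hθ(x) = (2x/π)·∫₀^∞ (θ(y)-θ(x))/(y²-x²) dy` (for `C¹` functions the integrand extends
continuously across `y = x`, so the integral needs no principal value there). -/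
noncomputable def hilbertEven (θ : ℝ → ℝ) (x : ℝ) : ℝ :=
  (2 * x / Real.pi) * ∫ y in Set.Ioi (0:ℝ), (θ y - θ x) / (y ^ 2 - x ^ 2)


section Aux

variable {θ : ℝ → ℝ}

/-- Nonpositivity of the derivative of an antitone function. -/
lemma aux_deriv_nonpos (hC1 : ContDiff ℝ 1 θ) (hmono : AntitoneOn θ (Set.Ici 0))
    {x : ℝ} (hx : 0 ≤ x) : deriv θ x ≤ 0 := by
  have hd : HasDerivAt θ (deriv θ x) x := ((hC1.differentiable one_ne_zero) x).hasDerivAt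
  rw [hasDerivAt_iff_tendsto_slope] at hd
  have hd' : Tendsto (slope θ x) (𝓝[>] x) (𝓝 (deriv θ x)) :=
    hd.mono_left (nhdsWithin_mono x (fun y hy => ne_of_gt hy))
  refine le_of_tendsto hd' ?_
  filter_upwards [self_mem_nhdsWithin] with y hy
  have hy' : x < y := hy
  have : θ y ≤ θ x := hmono hx (le_trans hx hy'.le) hy'.le
  rw [slope_def_field]
  exact div_nonpos_of_nonpos_of_nonneg (by linarith) (by linarith)

/-- A Lipschitz-type bound on a compact interval. -/
lemma aux_lip (hC1 : ContDiff ℝ 1 θ) (R : ℝ) :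
    ∃ C, 0 ≤ C ∧ (∀ y ∈ Icc (0:ℝ) R, |deriv θ y| ≤ C) ∧
      ∀ a ∈ Icc (0:ℝ) R, ∀ b ∈ Icc (0:ℝ) R, |θ a - θ b| ≤ C * |a - b| := by
  obtain ⟨C, hC⟩ := (isCompact_Icc (a := (0:ℝ)) (b := R)).exists_bound_of_continuousOn
    ((hC1.continuous_deriv le_rfl).continuousOn)
  refine ⟨max C 0, le_max_right _ _, fun y hy => le_trans (hC y hy) (le_max_left _ _),
    fun a ha b hb => ?_⟩
  have := Convex.norm_image_sub_le_of_norm_deriv_le (f := θ) (C := max C 0)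
    (fun z _ => (hC1.differentiable one_ne_zero).differentiableAt)
    (fun z hz => le_trans (hC z hz) (le_max_left _ _)) (convex_Icc 0 R) hb ha
  simpa [Real.norm_eq_abs] using this

lemma aux_tail_integrable (x : ℝ) :
    IntegrableOn (fun y : ℝ => ((y - x) ^ 2)⁻¹) (Set.Ioi (x + 1)) := by
  have hderiv : ∀ y ∈ Set.Ioi (x + 1),
      HasDerivAt (fun y : ℝ => -(y - x)⁻¹) (((y - x) ^ 2)⁻¹) y := by
    intro y hy
    have hy' : x + 1 < y := hy
    have hy0 : y - x ≠ 0 := by linarith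
    have h1 : HasDerivAt (fun y : ℝ => y - x) 1 y := (hasDerivAt_id y).sub_const x
    have := (h1.inv hy0).neg
    refine this.congr_deriv ?_
    ring
  have htend : Tendsto (fun y : ℝ => -(y - x)⁻¹) atTop (𝓝 0) := by
    have : Tendsto (fun y : ℝ => (y - x)⁻¹) atTop (𝓝 0) :=
      tendsto_inv_atTop_zero.comp (tendsto_atTop_add_const_right _ (-x) tendsto_id)
    simpa using this.neg
  refine integrableOn_Ioi_deriv_of_nonneg ?_ hderiv (fun y _ => by positivity) htend
  have : ContinuousAt (fun y : ℝ => -(y - x)⁻¹) (x + 1) := by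
    have : (x + 1 : ℝ) - x ≠ 0 := by norm_num
    fun_prop (disch := assumption)
  exact this.continuousWithinAt

lemma aux_tail_integral (x : ℝ) :
    ∫ y in Set.Ioi (x + 1), ((y - x) ^ 2)⁻¹ = 1 := by
  have hderiv : ∀ y ∈ Set.Ioi (x + 1),
      HasDerivAt (fun y : ℝ => -(y - x)⁻¹) (((y - x) ^ 2)⁻¹) y := by
    intro y hy
    have hy' : x + 1 < y := hy
    have hy0 : y - x ≠ 0 := by linarith
    have h1 : HasDerivAt (fun y : ℝ => y - x) 1 y := (hasDerivAt_id y).sub_const x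
    have := (h1.inv hy0).neg
    refine this.congr_deriv ?_
    ring
  have htend : Tendsto (fun y : ℝ => -(y - x)⁻¹) atTop (𝓝 0) := by
    have : Tendsto (fun y : ℝ => (y - x)⁻¹) atTop (𝓝 0) :=
      tendsto_inv_atTop_zero.comp (tendsto_atTop_add_const_right _ (-x) tendsto_id)
    simpa using this.neg
  have hcont : ContinuousWithinAt (fun y : ℝ => -(y - x)⁻¹) (Ici (x+1)) (x + 1) := by
    have h0 : (x + 1 : ℝ) - x ≠ 0 := by norm_num
    have : ContinuousAt (fun y : ℝ => -(y - x)⁻¹) (x + 1) := by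
      fun_prop (disch := assumption)
    exact this.continuousWithinAt
  rw [integral_Ioi_of_hasDerivAt_of_tendsto hcont hderiv (aux_tail_integrable x) htend]
  norm_num

end Aux

section Aux2
variable {θ : ℝ → ℝ}

lemma aux_meas (hc : Continuous θ) (x : ℝ) :
    Measurable fun y : ℝ => (θ y - θ x) / (y ^ 2 - x ^ 2) :=
  ((hc.measurable).sub measurable_const).div
    ((measurable_id.pow_const 2).sub measurable_const)

/-- pointwise bound near the singularity -/
lemma aux_bound_near {C x y : ℝ} (hx : 0 < x) (hy : 0 < y)
    (hlip : |θ y - θ x| ≤ C * |y - x|) (hC : 0 ≤ C) :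
    |(θ y - θ x) / (y ^ 2 - x ^ 2)| ≤ C / x := by
  rcases eq_or_ne y x with rfl | hne
  · simp [div_nonneg hC hx.le]
  · have hyx : |y - x| ≠ 0 := by simp [sub_eq_zero, hne]
    have hyx' : 0 < |y - x| := (abs_nonneg _).lt_of_ne (Ne.symm hyx)
    rw [abs_div]
    have hfac : |y ^ 2 - x ^ 2| = |y - x| * |y + x| := by
      rw [← abs_mul]; ring_nf
    have habs : |y + x| = y + x := abs_of_pos (by linarith)
    have hden : |y - x| * x ≤ |y ^ 2 - x ^ 2| := by
      rw [hfac, habs]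
      have : x ≤ y + x := by linarith
      nlinarith
    calc |θ y - θ x| / |y ^ 2 - x ^ 2| ≤ C * |y - x| / (|y - x| * x) := by
          apply div_le_div₀ (by positivity) hlip (by positivity) hden
      _ = C / x := by field_simp
end Aux2

section Aux3
variable {θ : ℝ → ℝ}

lemma aux_f_integrable (hC1 : ContDiff ℝ 1 θ) {M : ℝ} (hbdd : ∀ z, |θ z| ≤ M)
    {x : ℝ} (hx : 0 < x) :
    IntegrableOn (fun y => (θ y - θ x) / (y ^ 2 - x ^ 2)) (Set.Ioi (0:ℝ)) := by
  obtain ⟨C, hC0, _, hC⟩ := aux_lip hC1 (x + 1)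
  have hM0 : 0 ≤ M := le_trans (abs_nonneg _) (hbdd 0)
  have hmble := aux_meas hC1.continuous x
  have h1 : IntegrableOn (fun y => (θ y - θ x) / (y ^ 2 - x ^ 2)) (Set.Ioc 0 (x+1)) := by
    apply Measure.integrableOn_of_bounded (M := C / x) measure_Ioc_lt_top.ne
      hmble.aestronglyMeasurable
    filter_upwards [ae_restrict_mem measurableSet_Ioc] with y hy
    have h1 : |θ y - θ x| ≤ C * |y - x| :=
      hC y ⟨hy.1.le, hy.2⟩ x ⟨hx.le, by linarith⟩
    rw [Real.norm_eq_abs]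
    exact aux_bound_near hx hy.1 h1 hC0
  have h2 : IntegrableOn (fun y => (θ y - θ x) / (y ^ 2 - x ^ 2)) (Set.Ioi (x+1)) := by
    apply Integrable.mono' (((aux_tail_integrable x).const_mul (2*M)))
      hmble.aestronglyMeasurable.restrict
    filter_upwards [ae_restrict_mem measurableSet_Ioi] with y hy
    have hy' : x + 1 < y := hy
    have hyx : 0 < y - x := by linarith
    have hden : (y - x) ^ 2 ≤ y ^ 2 - x ^ 2 := by nlinarith
    have hdenpos : (0:ℝ) < (y - x) ^ 2 := by positivity
    have hnum : |θ y - θ x| ≤ 2 * M := by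
      calc |θ y - θ x| ≤ |θ y| + |θ x| := abs_sub _ _
        _ ≤ 2 * M := by linarith [hbdd y, hbdd x]
    rw [Real.norm_eq_abs, abs_div]
    calc |θ y - θ x| / |y ^ 2 - x ^ 2| ≤ 2 * M / ((y - x) ^ 2) := by
          apply div_le_div₀ (by positivity) hnum hdenpos
          rwa [abs_of_pos (lt_of_lt_of_le hdenpos hden)]
      _ = 2 * M * ((y - x) ^ 2)⁻¹ := by rw [div_eq_mul_inv]
  have := h1.union h2
  rwa [Set.Ioc_union_Ioi_eq_Ioi (by linarith : (0:ℝ) ≤ x + 1)] at this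

lemma aux_f_nonpos (hmono : AntitoneOn θ (Set.Ici 0)) {x : ℝ} (hx : 0 < x)
    {y : ℝ} (hy : 0 < y) : (θ y - θ x) / (y ^ 2 - x ^ 2) ≤ 0 := by
  rcases lt_trichotomy y x with h | rfl | h
  · apply div_nonpos_of_nonneg_of_nonpos
    · have := hmono (le_of_lt hy) (le_of_lt hx) h.le
      linarith
    · nlinarith
  · simp
  · apply div_nonpos_of_nonpos_of_nonneg
    · have := hmono (le_of_lt hx) (by linarith : (0:ℝ) ≤ y) h.le
      linarith
    · nlinarith

end Aux3

section Aux4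
variable {θ : ℝ → ℝ}

/-- FTC computation: `∫₀^{x₂} (y²-x²)⁻¹ dy = log((x-x₂)/(x+x₂))/(2x)` for `0 < x₂ < x`. -/
lemma aux_ftc {x x₂ : ℝ} (h2 : 0 < x₂) (hx : x₂ < x) :
    ∫ y in Set.Ioc (0:ℝ) x₂, (y ^ 2 - x ^ 2)⁻¹ =
      Real.log ((x - x₂) / (x + x₂)) / (2 * x) := by
  have hx0 : 0 < x := lt_trans h2 hx
  have key : ∀ y ∈ uIcc (0:ℝ) x₂,
      HasDerivAt (fun y => (Real.log (x - y) - Real.log (x + y)) / (2 * x))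
        ((y ^ 2 - x ^ 2)⁻¹) y := by
    intro y hy
    rw [uIcc_of_le h2.le] at hy
    have h1 : 0 < x - y := by have := hy.2; linarith
    have h2' : 0 < x + y := by have := hy.1; linarith
    have d1 : HasDerivAt (fun y : ℝ => x - y) (-1) y := by
      simpa using (hasDerivAt_id y).const_sub x
    have d2 : HasDerivAt (fun y : ℝ => x + y) 1 y := by
      simpa using (hasDerivAt_id y).const_add x
    have l1 : HasDerivAt (fun y : ℝ => Real.log (x - y)) ((x - y)⁻¹ * (-1)) y :=
      (Real.hasDerivAt_log h1.ne').comp y d1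
    have l2 : HasDerivAt (fun y : ℝ => Real.log (x + y)) ((x + y)⁻¹ * 1) y :=
      (Real.hasDerivAt_log h2'.ne').comp y d2
    have := (l1.sub l2).div_const (2 * x)
    refine this.congr_deriv ?_
    have hne : y ^ 2 - x ^ 2 ≠ 0 := by nlinarith
    have hne1 : x - y ≠ 0 := h1.ne'
    have hne2 : x + y ≠ 0 := h2'.ne'
    have hne3 : x ≠ 0 := hx0.ne'
    field_simp
    ring
  have hcont : ContinuousOn (fun y : ℝ => (y ^ 2 - x ^ 2)⁻¹) (uIcc (0:ℝ) x₂) := by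
    apply ContinuousOn.inv₀ (by fun_prop)
    intro y hy
    rw [uIcc_of_le h2.le] at hy
    have := hy.1; have := hy.2
    nlinarith
  have hint : IntervalIntegrable (fun y : ℝ => (y ^ 2 - x ^ 2)⁻¹) volume 0 x₂ :=
    hcont.intervalIntegrable
  have := intervalIntegral.integral_eq_sub_of_hasDerivAt key hint
  rw [← intervalIntegral.integral_of_le h2.le, this]
  rw [Real.log_div (by linarith) (by linarith)]
  norm_num

end Aux4


section Aux5
variable {θ : ℝ → ℝ}

lemma aux_hilbert_nonpos (hmono : AntitoneOn θ (Set.Ici 0)) {x : ℝ} (hx : 0 < x) :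
    hilbertEven θ x ≤ 0 := by
  unfold hilbertEven
  apply mul_nonpos_iff.mpr
  exact Or.inl ⟨by positivity,
    setIntegral_nonpos measurableSet_Ioi (fun y hy => aux_f_nonpos hmono hx hy)⟩

lemma aux_hilbert_le (hC1 : ContDiff ℝ 1 θ) {M : ℝ} (hbdd : ∀ z, |θ z| ≤ M)
    (hmono : AntitoneOn θ (Set.Ici 0)) {x₂ x : ℝ} (h2 : 0 < x₂) (hx : x₂ < x) :
    hilbertEven θ x ≤ (θ x₂ - θ x) * Real.log ((x - x₂) / (x + x₂)) / Real.pi := by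
  have hx0 : 0 < x := lt_trans h2 hx
  set f := fun y => (θ y - θ x) / (y ^ 2 - x ^ 2) with hf
  have hint : IntegrableOn f (Set.Ioi 0) := aux_f_integrable hC1 hbdd hx0
  have hint1 : IntegrableOn f (Set.Ioc 0 x₂) :=
    hint.mono_set (fun y hy => lt_of_lt_of_le hy.1 le_rfl)
  have hint2 : IntegrableOn f (Set.Ioi x₂) := hint.mono_set (Ioi_subset_Ioi h2.le)
  have hsplit : ∫ y in Set.Ioi (0:ℝ), f y
      = (∫ y in Set.Ioc 0 x₂, f y) + ∫ y in Set.Ioi x₂, f y := by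
    rw [← setIntegral_union (Ioc_disjoint_Ioi le_rfl) measurableSet_Ioi hint1 hint2,
      Set.Ioc_union_Ioi_eq_Ioi h2.le]
  have h3 : ∫ y in Set.Ioi x₂, f y ≤ 0 := setIntegral_nonpos measurableSet_Ioi
    (fun y hy => aux_f_nonpos hmono hx0 (lt_trans h2 hy))
  have hcont2 : IntegrableOn (fun y => (θ x₂ - θ x) * (y^2 - x^2)⁻¹) (Set.Ioc 0 x₂) := by
    apply (ContinuousOn.integrableOn_Icc ?_).mono_set Set.Ioc_subset_Icc_self
    apply ContinuousOn.mul continuousOn_const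
    apply ContinuousOn.inv₀ (by fun_prop)
    intro y hy
    nlinarith [hy.1, hy.2]
  have h4 : ∫ y in Set.Ioc 0 x₂, f y
      ≤ ∫ y in Set.Ioc 0 x₂, (θ x₂ - θ x) * (y^2-x^2)⁻¹ := by
    apply setIntegral_mono_on hint1 hcont2 measurableSet_Ioc
    intro y hy
    have hnum : θ x₂ - θ x ≤ θ y - θ x := by
      have := hmono (le_of_lt hy.1) (le_of_lt h2) hy.2
      linarith
    have hden : (y^2 - x^2) < 0 := by nlinarith [hy.1, hy.2]
    rw [hf]
    simp only [div_eq_mul_inv]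
    exact mul_le_mul_of_nonpos_right hnum (inv_nonpos.mpr hden.le)
  have h5 : ∫ y in Set.Ioc (0:ℝ) x₂, (θ x₂ - θ x) * (y^2-x^2)⁻¹
      = (θ x₂ - θ x) * (Real.log ((x - x₂)/(x + x₂)) / (2*x)) := by
    rw [MeasureTheory.integral_const_mul, aux_ftc h2 hx]
  have hI : ∫ y in Set.Ioi (0:ℝ), f y
      ≤ (θ x₂ - θ x) * (Real.log ((x-x₂)/(x+x₂)) / (2*x)) := by
    rw [hsplit]; linarith
  unfold hilbertEven
  have hcoef : (0:ℝ) < 2 * x / Real.pi := by positivity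
  calc (2*x/Real.pi) * ∫ y in Set.Ioi (0:ℝ), f y
      ≤ (2*x/Real.pi) * ((θ x₂ - θ x) * (Real.log ((x-x₂)/(x+x₂)) / (2*x))) :=
        mul_le_mul_of_nonneg_left hI hcoef.le
    _ = (θ x₂ - θ x) * Real.log ((x-x₂)/(x+x₂)) / Real.pi := by
        field_simp

end Aux5

section Aux6
variable {θ : ℝ → ℝ}

lemma aux_hilbert_bound (hC1 : ContDiff ℝ 1 θ) {M : ℝ} (hbdd : ∀ z, |θ z| ≤ M)
    {x₂ x₁ : ℝ} (h2 : 0 < x₂) (h12 : x₂ < x₁) :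
    ∃ B, 0 ≤ B ∧ ∀ x ∈ Icc x₂ x₁, |hilbertEven θ x| ≤ B := by
  obtain ⟨C, hC0, _, hC⟩ := aux_lip hC1 (x₁ + 1)
  have hM0 : 0 ≤ M := le_trans (abs_nonneg _) (hbdd 0)
  have hx10 : 0 < x₁ := lt_trans h2 h12
  refine ⟨(2*x₁/Real.pi) * ((C/x₂)*(x₁+1) + 2*M), by positivity, fun x hx => ?_⟩
  have hx0 : 0 < x := lt_of_lt_of_le h2 hx.1
  set f := fun y => (θ y - θ x) / (y ^ 2 - x ^ 2) with hfdef
  have hmble := aux_meas hC1.continuous x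
  -- integrability pieces (same as aux_f_integrable)
  have hint : IntegrableOn f (Set.Ioi 0) := aux_f_integrable hC1 hbdd hx0
  have hint1 : IntegrableOn f (Set.Ioc 0 (x+1)) :=
    hint.mono_set (fun y hy => hy.1)
  have hint2 : IntegrableOn f (Set.Ioi (x+1)) :=
    hint.mono_set (Ioi_subset_Ioi (by linarith))
  have hsplit : ∫ y in Set.Ioi (0:ℝ), f y
      = (∫ y in Set.Ioc 0 (x+1), f y) + ∫ y in Set.Ioi (x+1), f y := by
    rw [← setIntegral_union (Ioc_disjoint_Ioi le_rfl) measurableSet_Ioi hint1 hint2,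
      Set.Ioc_union_Ioi_eq_Ioi (by linarith : (0:ℝ) ≤ x + 1)]
  have bound1 : |∫ y in Set.Ioc (0:ℝ) (x+1), f y| ≤ (C/x₂) * (x₁+1) := by
    have key : ∀ y ∈ Set.Ioc (0:ℝ) (x+1), ‖f y‖ ≤ C/x₂ := by
      intro y hy
      have hlip : |θ y - θ x| ≤ C * |y - x| :=
        hC y ⟨hy.1.le, by linarith [hy.2, hx.2]⟩ x ⟨hx0.le, by linarith [hx.2]⟩
      have h1 : |f y| ≤ C / x := aux_bound_near hx0 hy.1 hlip hC0
      refine le_trans h1 ?_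
      rw [div_eq_mul_inv, div_eq_mul_inv]
      exact mul_le_mul_of_nonneg_left (inv_anti₀ h2 hx.1) hC0
    have := norm_setIntegral_le_of_norm_le_const (C := C/x₂)
      (measure_Ioc_lt_top : volume (Set.Ioc (0:ℝ) (x+1)) < ⊤) key
    rw [measureReal_def, Real.volume_Ioc] at this
    simp only [Real.norm_eq_abs] at this
    refine le_trans this ?_
    rw [ENNReal.toReal_ofReal (by linarith : (0:ℝ) ≤ x + 1 - 0)]
    have : x + 1 - 0 ≤ x₁ + 1 := by linarith [hx.2]
    exact mul_le_mul_of_nonneg_left this (by positivity)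
  have bound2 : |∫ y in Set.Ioi (x+1), f y| ≤ 2*M := by
    have hg : Integrable (fun y => 2*M*((y - x)^2)⁻¹) (volume.restrict (Set.Ioi (x+1))) :=
      (aux_tail_integrable x).const_mul (2*M)
    have hb : ∀ᵐ y ∂(volume.restrict (Set.Ioi (x+1))), ‖f y‖ ≤ 2*M*((y - x)^2)⁻¹ := by
      filter_upwards [ae_restrict_mem measurableSet_Ioi] with y hy
      have hy' : x + 1 < y := hy
      have hyx : 0 < y - x := by linarith
      have hden : (y - x) ^ 2 ≤ y ^ 2 - x ^ 2 := by nlinarith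
      have hdenpos : (0:ℝ) < (y - x) ^ 2 := by positivity
      have hnum : |θ y - θ x| ≤ 2 * M := by
        calc |θ y - θ x| ≤ |θ y| + |θ x| := abs_sub _ _
          _ ≤ 2 * M := by linarith [hbdd y, hbdd x]
      rw [Real.norm_eq_abs, hfdef, abs_div]
      calc |θ y - θ x| / |y ^ 2 - x ^ 2| ≤ 2 * M / ((y - x) ^ 2) := by
            apply div_le_div₀ (by positivity) hnum hdenpos
            rwa [abs_of_pos (lt_of_lt_of_le hdenpos hden)]
        _ = 2 * M * ((y - x) ^ 2)⁻¹ := by rw [div_eq_mul_inv]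
    have h := norm_integral_le_of_norm_le hg hb
    rw [Real.norm_eq_abs] at h
    refine le_trans h ?_
    rw [MeasureTheory.integral_const_mul, aux_tail_integral x]
    simp
  have hIbound : |∫ y in Set.Ioi (0:ℝ), f y| ≤ (C/x₂)*(x₁+1) + 2*M := by
    rw [hsplit]
    exact le_trans (abs_add_le _ _) (by linarith)
  show |(2 * x / Real.pi) * ∫ y in Set.Ioi (0:ℝ), f y| ≤ _
  rw [abs_mul]
  have h1 : |2 * x / Real.pi| = 2 * x / Real.pi := abs_of_pos (by positivity)
  rw [h1]
  apply mul_le_mul (by rw [div_le_div_iff₀ Real.pi_pos Real.pi_pos]; nlinarith [Real.pi_pos, hx.2])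
    hIbound (abs_nonneg _) (by positivity)

lemma aux_HI_integrable (hC1 : ContDiff ℝ 1 θ) {M : ℝ} (hbdd : ∀ z, |θ z| ≤ M)
    {x₂ x₁ : ℝ} (h2 : 0 < x₂) (h12 : x₂ < x₁) :
    IntervalIntegrable (fun x => hilbertEven θ x * deriv θ x) volume x₂ x₁ := by
  obtain ⟨B, hB0, hB⟩ := aux_hilbert_bound hC1 hbdd h2 h12
  obtain ⟨C, hC0, hCd, _⟩ := aux_lip hC1 (x₁ + 1)
  rw [intervalIntegrable_iff_integrableOn_Ioc_of_le h12.le]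
  have hsm : StronglyMeasurable
      (fun x : ℝ => ∫ y in Set.Ioi (0:ℝ), (θ y - θ x)/(y^2 - x^2)) := by
    apply StronglyMeasurable.integral_prod_right'
      (f := fun p : ℝ × ℝ => (θ p.2 - θ p.1)/(p.2^2 - p.1^2))
    apply Measurable.stronglyMeasurable
    exact ((hC1.continuous.measurable.comp measurable_snd).sub
        (hC1.continuous.measurable.comp measurable_fst)).div
      ((measurable_snd.pow_const 2).sub (measurable_fst.pow_const 2))
  have hmeas : AEStronglyMeasurable (fun x => hilbertEven θ x * deriv θ x) volume := by
    have hc : Continuous (fun x : ℝ => 2 * x / Real.pi) := by fun_prop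
    exact ((hc.stronglyMeasurable.mul hsm).mul
      (hC1.continuous_deriv le_rfl).stronglyMeasurable).aestronglyMeasurable
  apply Measure.integrableOn_of_bounded (M := B * C) measure_Ioc_lt_top.ne hmeas
  filter_upwards [ae_restrict_mem measurableSet_Ioc] with x hx
  rw [Real.norm_eq_abs, abs_mul]
  have h1 : |hilbertEven θ x| ≤ B := hB x ⟨hx.1.le, hx.2⟩
  have h2' : |deriv θ x| ≤ C := hCd x ⟨by linarith [hx.1], by linarith [hx.2]⟩
  exact mul_le_mul h1 h2' (abs_nonneg _) hB0

end Aux6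

/-- Theorem: for a `C¹`, bounded, even function `θ` nonincreasing on `[0,∞)` and any
`0 < x₂ < x₁`,
`∫_{x₂}^{x₁} Hθ(x)·θ'(x) dx ≥ (1/(4π))·log((x₁+x₂)/(x₁-x₂))·(θ(x₂)-θ(x₁))²`. -/
theorem stmt_13 (θ : ℝ → ℝ)
    (hC1 : ContDiff ℝ 1 θ)
    (hbdd : ∃ M : ℝ, ∀ x : ℝ, |θ x| ≤ M)
    (heven : ∀ x : ℝ, θ (-x) = θ x)
    (hmono : AntitoneOn θ (Set.Ici 0))
    (x₁ x₂ : ℝ) (hx₂ : 0 < x₂) (hx₁ : x₂ < x₁) :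
    (1 / (4 * Real.pi)) * Real.log ((x₁ + x₂) / (x₁ - x₂)) * (θ x₂ - θ x₁) ^ 2
      ≤ ∫ x in x₂..x₁, hilbertEven θ x * deriv θ x := by
  obtain ⟨M, hbdd⟩ := hbdd
  have hπ := Real.pi_pos
  set c := Real.log ((x₁ + x₂) / (x₁ - x₂)) with hc
  have hd : (0:ℝ) < x₁ - x₂ := by linarith
  have hc0 : 0 ≤ c := Real.log_nonneg (by rw [le_div_iff₀ hd]; linarith)
  set ψ := fun x => c / Real.pi * ((θ x₂ - θ x) * (-(deriv θ x))) with hψ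
  have hψcont : Continuous ψ :=
    continuous_const.mul ((continuous_const.sub hC1.continuous).mul
      ((hC1.continuous_deriv le_rfl).neg))
  -- pointwise comparison
  have h1 : ∀ x ∈ Icc x₂ x₁, ψ x ≤ hilbertEven θ x * deriv θ x := by
    intro x hx
    rcases eq_or_lt_of_le hx.1 with rfl | hlt
    · have h0 : ψ x₂ = 0 := by simp [hψ]
      rw [h0]
      have h1 : 0 ≤ (-(hilbertEven θ x₂)) * (-(deriv θ x₂)) :=
        mul_nonneg (neg_nonneg.mpr (aux_hilbert_nonpos hmono hx₂))
          (neg_nonneg.mpr (aux_deriv_nonpos hC1 hmono hx₂.le))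
      linarith [h1, neg_mul_neg (hilbertEven θ x₂) (deriv θ x₂)]

    · have hx0 : (0:ℝ) < x := lt_trans hx₂ hlt
      have hA := aux_hilbert_le hC1 hbdd hmono hx₂ hlt
      have hd' : deriv θ x ≤ 0 := aux_deriv_nonpos hC1 hmono hx0.le
      have step1 : ((θ x₂ - θ x) * Real.log ((x - x₂)/(x + x₂)) / Real.pi) * deriv θ x
          ≤ hilbertEven θ x * deriv θ x := mul_le_mul_of_nonpos_right hA hd'
      refine le_trans ?_ step1
      have hlog : Real.log ((x - x₂)/(x + x₂)) = - Real.log ((x + x₂)/(x - x₂)) := by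
        rw [← Real.log_inv]
        congr 1
        rw [inv_div]
      have hq : 0 ≤ θ x₂ - θ x := by
        have := hmono (le_of_lt hx₂) hx0.le hlt.le
        linarith
      have hxd : (0:ℝ) < x - x₂ := by linarith
      have hlogx : c ≤ Real.log ((x + x₂)/(x - x₂)) := by
        apply Real.log_le_log (div_pos (by linarith) hd)
        rw [div_le_div_iff₀ hd hxd]
        nlinarith [hx.2]
      rw [hlog]
      have expand : (θ x₂ - θ x) * (-(Real.log ((x+x₂)/(x-x₂)))) / Real.pi * deriv θ x
          = Real.log ((x+x₂)/(x-x₂)) / Real.pi * ((θ x₂ - θ x) * (-(deriv θ x))) := by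
        ring
      rw [expand, hψ]
      exact mul_le_mul_of_nonneg_right ((div_le_div_iff_of_pos_right hπ).mpr hlogx)
        (mul_nonneg hq (neg_nonneg.mpr hd'))
  have hint1 : IntervalIntegrable ψ volume x₂ x₁ := hψcont.intervalIntegrable _ _
  have hint2 := aux_HI_integrable hC1 hbdd hx₂ hx₁
  have hmono_int : ∫ x in x₂..x₁, ψ x ≤ ∫ x in x₂..x₁, hilbertEven θ x * deriv θ x :=
    intervalIntegral.integral_mono_on hx₁.le hint1 hint2 h1
  -- compute ∫ ψ via FTC
  have hG : ∀ x, HasDerivAt (fun x => (θ x₂ - θ x)^2/2) ((θ x₂ - θ x) * (-(deriv θ x))) x := by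
    intro x
    have hθ : HasDerivAt θ (deriv θ x) x := ((hC1.differentiable one_ne_zero) x).hasDerivAt
    have := (((hasDerivAt_const x (θ x₂)).sub hθ).pow 2).div_const 2
    refine this.congr_deriv ?_
    simp only [Pi.sub_apply]
    ring
  have hcψ' : IntervalIntegrable (fun x => (θ x₂ - θ x) * (-(deriv θ x))) volume x₂ x₁ :=
    (((continuous_const.sub hC1.continuous).mul
      ((hC1.continuous_deriv le_rfl).neg))).intervalIntegrable _ _
  have hFTC := intervalIntegral.integral_eq_sub_of_hasDerivAt (fun x _ => hG x) hcψ'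
  have hψint : ∫ x in x₂..x₁, ψ x = c / Real.pi * ((θ x₂ - θ x₁)^2/2) := by
    rw [hψ]
    rw [intervalIntegral.integral_const_mul, hFTC]
    simp
  have hfinal : (1/(4*Real.pi)) * c * (θ x₂ - θ x₁)^2
      ≤ c / Real.pi * ((θ x₂ - θ x₁)^2/2) := by
    have e1 : (1/(4*Real.pi)) * c * (θ x₂ - θ x₁)^2
        = (c * (θ x₂ - θ x₁)^2)/(4*Real.pi) := by ring
    have e2 : c / Real.pi * ((θ x₂ - θ x₁)^2/2) = (c * (θ x₂ - θ x₁)^2)/(2*Real.pi) := by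
      rw [div_mul_div_comm, mul_comm Real.pi 2]
    rw [e1, e2]
    have hcs : 0 ≤ c * (θ x₂ - θ x₁) ^ 2 := mul_nonneg hc0 (sq_nonneg _)
    gcongr
    linarith
  linarith [hmono_int, hψint ▸ hmono_int]
end

section
/- Let A > 0 and let θ : ℝ → ℝ be C¹, bounded, even, and nonincreasing on (0,∞). Suppose the maximum over ℝ of the function x ↦ θ(x) − A·(1−|x|^{1/2})⁺ is attained at a point x₀ ∈ (0, 1/2]. Then Hθ(x₀) ≤ −c₀·A·x₀^{1/2}, where c₀ = (2/π)·∫₁² (√z − 1)/(z²−1) dz > 0. -/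
open MeasureTheory Filter Set Topology

/-- The universal constant `c₀ = (2/π)·∫₁² (√z − 1)/(z²−1) dz`. -/
noncomputable def c0 : ℝ :=
  (2 / Real.pi) * ∫ z in (1:ℝ)..2, (Real.sqrt z - 1) / (z ^ 2 - 1)

set_option maxHeartbeats 2000000 in
/-- Theorem: let `A > 0` and let `θ` be `C¹`, bounded, even and nonincreasing on `(0,∞)`.
If the maximum over `ℝ` of `x ↦ θ(x) − A(1−|x|^{1/2})⁺` is attained at `x₀ ∈ (0,1/2]`,
then `Hθ(x₀) ≤ −c₀·A·x₀^{1/2}`, where `c₀ = (2/π)·∫₁² (√z−1)/(z²−1) dz > 0`. -/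
theorem stmt_18 (A : ℝ) (hA : 0 < A) (θ : ℝ → ℝ)
    (hC1 : ContDiff ℝ 1 θ)
    (hbdd : ∃ M : ℝ, ∀ x : ℝ, |θ x| ≤ M)
    (heven : ∀ x : ℝ, θ (-x) = θ x)
    (hmono : AntitoneOn θ (Set.Ioi 0))
    (x₀ : ℝ) (hx₀ : x₀ ∈ Set.Ioc (0:ℝ) (1 / 2))
    (hmax : ∀ x : ℝ, θ x - A * max (1 - Real.sqrt |x|) 0
                      ≤ θ x₀ - A * max (1 - Real.sqrt |x₀|) 0) :
    0 < c0 ∧ hilbertEven θ x₀ ≤ -(c0 * A * Real.sqrt x₀) := by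
  obtain ⟨hx0pos, hx0le⟩ := hx₀
  obtain ⟨M, hM⟩ := hbdd
  have hMnn : 0 ≤ M := (abs_nonneg _).trans (hM 0)
  have hpi : (0:ℝ) < Real.pi := Real.pi_pos
  set I : ℝ := ∫ z in (1:ℝ)..2, (Real.sqrt z - 1) / (z ^ 2 - 1) with hIdef
  -- positivity of c0
  have hIint : IntervalIntegrable (fun z => (Real.sqrt z - 1) / (z ^ 2 - 1)) volume 1 2 := by
    rw [intervalIntegrable_iff_integrableOn_Ioc_of_le (by norm_num)]
    apply Measure.integrableOn_of_bounded (M := 1) measure_Ioc_lt_top.ne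
    · exact ((Real.continuous_sqrt.measurable.sub measurable_const).div
        ((measurable_id.pow_const 2).sub measurable_const)).aestronglyMeasurable
    · filter_upwards [ae_restrict_mem measurableSet_Ioc] with z hz
      have hz1 : (1:ℝ) < z := hz.1
      have hs1 : (1:ℝ) ≤ Real.sqrt z := Real.one_le_sqrt.mpr hz1.le
      have hsq : Real.sqrt z ^ 2 = z := Real.sq_sqrt (by linarith)
      have hden : (0:ℝ) < z ^ 2 - 1 := by nlinarith
      rw [Real.norm_eq_abs, abs_div, abs_of_nonneg (by linarith), abs_of_pos hden,
        div_le_one hden]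
      nlinarith [Real.sqrt_nonneg z]
  have hIpos : 0 < I := by
    rw [hIdef]
    apply intervalIntegral.intervalIntegral_pos_of_pos_on hIint _ one_lt_two
    intro z hz
    have hz1 : (1:ℝ) < z := hz.1
    have hden : (0:ℝ) < z ^ 2 - 1 := by nlinarith
    have : (1:ℝ) < Real.sqrt z := by
      rw [show (1:ℝ) = Real.sqrt 1 from (Real.sqrt_one).symm]
      exact Real.sqrt_lt_sqrt zero_le_one hz1
    exact div_pos (by linarith) hden
  have hc0 : c0 = 2 / Real.pi * I := rfl
  have hc0pos : 0 < c0 := by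
    rw [hc0]; exact mul_pos (div_pos two_pos hpi) hIpos
  refine ⟨hc0pos, ?_⟩
  set f : ℝ → ℝ := fun y => (θ y - θ x₀) / (y ^ 2 - x₀ ^ 2) with hfdef
  set g : ℝ → ℝ := fun y => A * (Real.sqrt x₀ - Real.sqrt y) / (y ^ 2 - x₀ ^ 2) with hgdef
  have h2x0 : (0:ℝ) < 2 * x₀ := by linarith
  have hfm : Measurable f :=
    (hC1.continuous.measurable.sub measurable_const).div
      ((measurable_id.pow_const 2).sub measurable_const)
  have hgm : Measurable g :=
    ((measurable_const.sub Real.continuous_sqrt.measurable).const_mul A).div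
      ((measurable_id.pow_const 2).sub measurable_const)
  -- Lipschitz bound on [0,1]
  obtain ⟨C, hC⟩ := (isCompact_Icc (a := (0:ℝ)) (b := 1)).exists_bound_of_continuousOn
      (hC1.continuous_deriv le_rfl).continuousOn
  set L : ℝ := max C 0 with hLdef
  have hLnn : 0 ≤ L := le_max_right _ _
  have hx₀Icc : x₀ ∈ Icc (0:ℝ) 1 := ⟨hx0pos.le, by linarith⟩
  have hlip : ∀ y ∈ Icc (0:ℝ) 1, |θ y - θ x₀| ≤ L * |y - x₀| := by
    intro y hy
    have := (convex_Icc (0:ℝ) 1).norm_image_sub_le_of_norm_deriv_le (C := L)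
      (fun x _ => (hC1.differentiable one_ne_zero).differentiableAt)
      (fun x hx => le_trans (hC x hx) (le_max_left _ _)) hx₀Icc hy
    simpa [Real.norm_eq_abs] using this
  -- integrability of f near the origin
  have hint1 : IntegrableOn f (Ioc 0 (2 * x₀)) := by
    apply Measure.integrableOn_of_bounded (M := L / x₀) measure_Ioc_lt_top.ne
      hfm.aestronglyMeasurable
    filter_upwards [ae_restrict_mem measurableSet_Ioc] with y hy
    rcases eq_or_ne y x₀ with rfl | hne
    · simp only [hfdef, Real.norm_eq_abs, sub_self, zero_div, abs_zero]
      positivity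
    · have h1 : |θ y - θ x₀| ≤ L * |y - x₀| := hlip y ⟨hy.1.le, by linarith [hy.2]⟩
      have habs : (0:ℝ) < |y - x₀| := abs_pos.mpr (sub_ne_zero.mpr hne)
      have h2 : x₀ * |y - x₀| ≤ |y ^ 2 - x₀ ^ 2| := by
        have heq : y ^ 2 - x₀ ^ 2 = (y + x₀) * (y - x₀) := by ring
        rw [heq, abs_mul, abs_of_pos (by linarith [hy.1] : (0:ℝ) < y + x₀)]
        exact mul_le_mul_of_nonneg_right (by linarith [hy.1]) (abs_nonneg _)
      rw [Real.norm_eq_abs, hfdef]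
      simp only []
      rw [abs_div, div_le_div_iff₀ (lt_of_lt_of_le (mul_pos hx0pos habs) h2) hx0pos]
      nlinarith [mul_le_mul_of_nonneg_left h2 hLnn, mul_le_mul_of_nonneg_right h1 hx0pos.le]
  -- integrability of f away from the origin
  have hint2 : IntegrableOn f (Ioi (2 * x₀)) := by
    have hg2 : IntegrableOn (fun y => y ^ (-2 : ℝ)) (Ioi (2 * x₀)) :=
      integrableOn_Ioi_rpow_of_lt (by norm_num) h2x0
    apply Integrable.mono' (hg2.const_mul (8 * M / 3)) hfm.aestronglyMeasurable
    filter_upwards [ae_restrict_mem measurableSet_Ioi] with y hy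
    have hy0 : (0:ℝ) < y := h2x0.trans (Set.mem_Ioi.mp hy)
    have hyr : y ^ ((-2):ℝ) = (y ^ 2)⁻¹ := by
      rw [show ((-2):ℝ) = ((-2 : ℤ) : ℝ) by norm_num, Real.rpow_intCast]
      simp [zpow_neg]
    have hden : (3/4) * y ^ 2 ≤ y ^ 2 - x₀ ^ 2 := by nlinarith [Set.mem_Ioi.mp hy]
    have hdenpos : (0:ℝ) < y ^ 2 - x₀ ^ 2 := by nlinarith
    have hb1 := abs_le.mp (hM y)
    have hb2 := abs_le.mp (hM x₀)
    have hnum : |θ y - θ x₀| ≤ 2 * M := abs_le.mpr ⟨by linarith, by linarith⟩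
    rw [Real.norm_eq_abs, hfdef]
    simp only []
    rw [abs_div, abs_of_pos hdenpos, hyr]
    calc |θ y - θ x₀| / (y ^ 2 - x₀ ^ 2) ≤ (2 * M) / ((3/4) * y ^ 2) :=
          div_le_div₀ (by positivity) hnum (by positivity) hden
      _ = 8 * M / 3 * (y ^ 2)⁻¹ := by field_simp; ring
  have hintIoi : IntegrableOn f (Ioi 0) := by
    rw [← Ioc_union_Ioi_eq_Ioi h2x0.le]
    exact hint1.union hint2
  -- split the integral
  have hsub1 : Ioc (0:ℝ) x₀ ⊆ Ioi 0 := fun y hy => hy.1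
  have hsub2 : Ioc x₀ (2*x₀) ⊆ Ioi 0 := fun y hy => hx0pos.trans hy.1
  have hsub3 : Ioi (2*x₀) ⊆ Ioi (0:ℝ) := Ioi_subset_Ioi h2x0.le
  have hsubIoi : Ioi x₀ ⊆ Ioi (0:ℝ) := Ioi_subset_Ioi hx0pos.le
  have e2 : ∫ y in Ioi x₀, f y
      = (∫ y in Ioc x₀ (2*x₀), f y) + ∫ y in Ioi (2*x₀), f y := by
    rw [← setIntegral_union Ioc_disjoint_Ioi_same measurableSet_Ioi
      (hintIoi.mono_set hsub2) (hintIoi.mono_set hsub3),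
      Ioc_union_Ioi_eq_Ioi (by linarith)]
  have e1 : ∫ y in Ioi 0, f y
      = (∫ y in Ioc 0 x₀, f y) + ∫ y in Ioi x₀, f y := by
    rw [← setIntegral_union Ioc_disjoint_Ioi_same measurableSet_Ioi
      (hintIoi.mono_set hsub1) (hintIoi.mono_set hsubIoi),
      Ioc_union_Ioi_eq_Ioi hx0pos.le]
  -- piece 1 nonpositive
  have b1 : ∫ y in Ioc (0:ℝ) x₀, f y ≤ 0 := by
    apply setIntegral_nonpos measurableSet_Ioc
    intro y hy
    have hθ : θ x₀ ≤ θ y := hmono hy.1 (Set.mem_Ioi.mpr hx0pos) hy.2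
    have hden : y ^ 2 - x₀ ^ 2 ≤ 0 := by nlinarith [hy.1, hy.2]
    exact div_nonpos_of_nonneg_of_nonpos (by linarith) hden
  -- piece 3 nonpositive
  have b3 : ∫ y in Ioi (2*x₀), f y ≤ 0 := by
    apply setIntegral_nonpos measurableSet_Ioi
    intro y hy
    have hyI : y ∈ Set.Ioi (0:ℝ) := hsub3 hy
    have hθ : θ y ≤ θ x₀ := hmono (Set.mem_Ioi.mpr hx0pos) hyI (by linarith [Set.mem_Ioi.mp hy])
    have hden : (0:ℝ) ≤ y ^ 2 - x₀ ^ 2 := by nlinarith [Set.mem_Ioi.mp hy]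
    exact div_nonpos_of_nonpos_of_nonneg (by linarith) hden
  -- piece 2: compare with g
  have hintg : IntegrableOn g (Ioc x₀ (2*x₀)) := by
    apply Measure.integrableOn_of_bounded (M := A / (Real.sqrt x₀ * x₀)) measure_Ioc_lt_top.ne
      hgm.aestronglyMeasurable
    filter_upwards [ae_restrict_mem measurableSet_Ioc] with y hy
    have hyx : x₀ < y := hy.1
    have hy0 : (0:ℝ) < y := hx0pos.trans hyx
    have hs0 : (0:ℝ) < Real.sqrt x₀ := Real.sqrt_pos.mpr hx0pos
    have hsle : Real.sqrt x₀ ≤ Real.sqrt y := Real.sqrt_le_sqrt hyx.le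
    have hsqy : Real.sqrt y ^ 2 = y := Real.sq_sqrt hy0.le
    have hsqx : Real.sqrt x₀ ^ 2 = x₀ := Real.sq_sqrt hx0pos.le
    have hnum : (Real.sqrt y - Real.sqrt x₀) * Real.sqrt x₀ ≤ y - x₀ := by
      nlinarith [Real.sqrt_nonneg y]
    have hden : x₀ * (y - x₀) ≤ y ^ 2 - x₀ ^ 2 := by nlinarith
    have hdenpos : (0:ℝ) < y ^ 2 - x₀ ^ 2 := by nlinarith
    rw [Real.norm_eq_abs, hgdef]
    simp only []
    rw [abs_div, abs_of_pos hdenpos, abs_mul, abs_of_pos hA,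
      abs_sub_comm, abs_of_nonneg (by linarith : (0:ℝ) ≤ Real.sqrt y - Real.sqrt x₀)]
    have step1 : (Real.sqrt y - Real.sqrt x₀) * (Real.sqrt x₀ * x₀) ≤ y ^ 2 - x₀ ^ 2 := by
      calc (Real.sqrt y - Real.sqrt x₀) * (Real.sqrt x₀ * x₀)
          = ((Real.sqrt y - Real.sqrt x₀) * Real.sqrt x₀) * x₀ := by ring
        _ ≤ (y - x₀) * x₀ := mul_le_mul_of_nonneg_right hnum hx0pos.le
        _ = x₀ * (y - x₀) := by ring
        _ ≤ y ^ 2 - x₀ ^ 2 := hden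
    rw [div_le_div_iff₀ hdenpos (by positivity)]
    nlinarith [mul_le_mul_of_nonneg_left step1 hA.le]
  have b2 : ∫ y in Ioc x₀ (2*x₀), f y ≤ ∫ y in Ioc x₀ (2*x₀), g y := by
    apply setIntegral_mono_on (hintIoi.mono_set hsub2) hintg measurableSet_Ioc
    intro y hy
    have hyx : x₀ < y := hy.1
    have hy1 : y ≤ 1 := by linarith [hy.2]
    have hy0 : (0:ℝ) < y := hx0pos.trans hyx
    have hdenpos : (0:ℝ) < y ^ 2 - x₀ ^ 2 := by nlinarith
    have hmy := hmax y
    rw [abs_of_pos hy0, abs_of_pos hx0pos,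
      max_eq_left (by simp [Real.sqrt_le_one.mpr hy1] : (0:ℝ) ≤ 1 - Real.sqrt y),
      max_eq_left (by simp [Real.sqrt_le_one.mpr (show x₀ ≤ 1 by linarith)] :
        (0:ℝ) ≤ 1 - Real.sqrt x₀)] at hmy
    have hnum : θ y - θ x₀ ≤ A * (Real.sqrt x₀ - Real.sqrt y) := by nlinarith
    exact div_le_div_of_nonneg_right hnum hdenpos.le
  -- evaluate the comparison integral via the substitution y = x₀ z
  have hx0ne : x₀ ≠ 0 := hx0pos.ne'
  have h2 := intervalIntegral.smul_integral_comp_mul_left (f := g) (a := (1:ℝ)) (b := 2) x₀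
  rw [show x₀ * 1 = x₀ by ring, show x₀ * 2 = 2 * x₀ by ring] at h2
  have h3 : ∫ z in (1:ℝ)..2, g (x₀ * z)
      = ∫ z in (1:ℝ)..2, (A * Real.sqrt x₀ / x₀ ^ 2) * ((1 - Real.sqrt z) / (z ^ 2 - 1)) := by
    apply intervalIntegral.integral_congr
    intro z hz
    rw [uIcc_of_le (by norm_num : (1:ℝ) ≤ 2)] at hz
    have hz1 : (1:ℝ) ≤ z := hz.1
    simp only [hgdef]
    rw [Real.sqrt_mul hx0pos.le]
    rcases eq_or_lt_of_le hz1 with rfl | hz1'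
    · simp
    · have hzpos : (0:ℝ) < z ^ 2 - 1 := by nlinarith
      have hdne : (x₀ * z) ^ 2 - x₀ ^ 2 ≠ 0 := by
        have hh : (x₀ * z) ^ 2 - x₀ ^ 2 = x₀ ^ 2 * (z ^ 2 - 1) := by ring
        rw [hh]
        positivity
      field_simp
  have h4 : ∫ z in (1:ℝ)..2, (A * Real.sqrt x₀ / x₀ ^ 2) * ((1 - Real.sqrt z) / (z ^ 2 - 1))
      = (A * Real.sqrt x₀ / x₀ ^ 2) * (-I) := by
    rw [intervalIntegral.integral_const_mul]
    congr 1
    rw [hIdef, ← intervalIntegral.integral_neg]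
    apply intervalIntegral.integral_congr
    intro z _
    show (1 - Real.sqrt z) / (z ^ 2 - 1) = -((Real.sqrt z - 1) / (z ^ 2 - 1))
    rw [← neg_div, neg_sub]
  have hmid : ∫ y in Ioc x₀ (2*x₀), g y = x₀ * ((A * Real.sqrt x₀ / x₀ ^ 2) * (-I)) := by
    rw [← intervalIntegral.integral_of_le (by linarith : x₀ ≤ 2 * x₀), ← h2, h3, h4,
      smul_eq_mul]
  have key : ∫ y in Ioi (0:ℝ), f y ≤ x₀ * ((A * Real.sqrt x₀ / x₀ ^ 2) * (-I)) := by
    rw [e1, e2]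
    have hb2 := b2.trans_eq hmid
    linarith [b1, b3]
  have hπne : Real.pi ≠ 0 := hpi.ne'
  calc hilbertEven θ x₀ = (2 * x₀ / Real.pi) * ∫ y in Ioi (0:ℝ), f y := rfl
    _ ≤ (2 * x₀ / Real.pi) * (x₀ * ((A * Real.sqrt x₀ / x₀ ^ 2) * (-I))) :=
        mul_le_mul_of_nonneg_left key (by positivity)
    _ = -(c0 * A * Real.sqrt x₀) := by
        rw [hc0]
        field_simp
end
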